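/- No-Go theorem (momentum-space version): let ∇ : ℝ → ℝ be 2Λ-periodic and real-analytic on all of ℝ, and let C : ℝ × ℝ → ℝ be 2Λ-periodic in each argument, real-analytic in each argument, and not identically zero on any neighborhood of a point (p₀, q₀) with C(p₀,q₀) ≠ 0. If C(p,q)·(∇(p) + ∇(q) − ∇(p+q)) = 0 for all p, q ∈ ℝ, then ∇ is identically zero. -/

import Mathlib

/-- Identity theorem helper: an everywhere-analytic real function vanishing on a
nonempty open set vanishes identically. -/
lemma vanish_of_vanish_open (f : ℝ → ℝ) (hf : AnalyticOnNhd ℝ f Set.univ)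
    {U : Set ℝ} (hU : IsOpen U) {x₀ : ℝ} (hx₀ : x₀ ∈ U)
    (hz : ∀ x ∈ U, f x = 0) : ∀ x, f x = 0 := by
  have h := hf.eqOn_zero_of_preconnected_of_eventuallyEq_zero isPreconnected_univ
    (Set.mem_univ x₀) (Filter.eventually_of_mem (hU.mem_nhds hx₀) hz)
  exact fun x => h (Set.mem_univ x)

/-- No-Go theorem (momentum-space version): a `2Λ`-periodic, everywhere
real-analytic derivative symbol `∇` that is compatible, via a `2Λ`-periodic,
separately real-analytic modified-product symbol `C` which is somewhere
nonzero, with the summed Leibniz rule `C(p,q)(∇p + ∇q - ∇(p+q)) = 0`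
must vanish identically. -/
theorem stmt_7 (Λ : ℝ) (hΛ : 0 < Λ) (nabla : ℝ → ℝ) (C : ℝ → ℝ → ℝ)
    (hnper : ∀ x : ℝ, nabla (x + 2 * Λ) = nabla x)
    (hnan : AnalyticOn ℝ nabla Set.univ)
    (hCper₁ : ∀ p q : ℝ, C (p + 2 * Λ) q = C p q)
    (hCper₂ : ∀ p q : ℝ, C p (q + 2 * Λ) = C p q)
    (hCan₁ : ∀ q : ℝ, AnalyticOn ℝ (fun p => C p q) Set.univ)
    (hCan₂ : ∀ p : ℝ, AnalyticOn ℝ (fun q => C p q) Set.univ)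
    (hCne : ∃ p₀ q₀ : ℝ, C p₀ q₀ ≠ 0)
    (hLeib : ∀ p q : ℝ, C p q * (nabla p + nabla q - nabla (p + q)) = 0) :
    ∀ p : ℝ, nabla p = 0 := by
  obtain ⟨p₀, q₀, hpq⟩ := hCne
  have hnanN : AnalyticOnNhd ℝ nabla Set.univ := analyticOn_univ.mp hnan
  -- the Cauchy defect, analytic in each variable
  have hdef : ∀ q : ℝ, AnalyticOnNhd ℝ (fun p => nabla p + nabla q - nabla (p + q)) Set.univ := by
    intro q x _
    have hg : AnalyticAt ℝ (fun p : ℝ => p + q) x := analyticAt_id.add analyticAt_const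
    have h2 : AnalyticAt ℝ (fun p => nabla (p + q)) x := by
      exact AnalyticAt.comp (f := fun p : ℝ => p + q) (hnanN (x + q) trivial) hg
    exact ((hnanN x trivial).add analyticAt_const).sub h2
  have hdef₂ : ∀ p : ℝ, AnalyticOnNhd ℝ (fun q => nabla p + nabla q - nabla (p + q)) Set.univ := by
    intro p x _
    have hg : AnalyticAt ℝ (fun q : ℝ => p + q) x := analyticAt_const.add analyticAt_id
    have h2 : AnalyticAt ℝ (fun q => nabla (p + q)) x := by
      exact AnalyticAt.comp (f := fun q : ℝ => p + q) (hnanN (p + x) trivial) hg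
    exact (analyticAt_const.add (hnanN x trivial)).sub h2
  -- Step 1: if C(·,q) is nonzero somewhere, then Cauchy's equation holds for this q and all p.
  have step1 : ∀ q : ℝ, (∃ p₁, C p₁ q ≠ 0) →
      ∀ p, nabla p + nabla q - nabla (p + q) = 0 := by
    rintro q ⟨p₁, hp₁⟩
    have hCcont : Continuous fun p => C p q :=
      continuousOn_univ.mp (analyticOn_univ.mp (hCan₁ q)).continuousOn
    have hUopen : IsOpen {p : ℝ | C p q ≠ 0} :=
      isOpen_compl_iff.mpr (isClosed_singleton.preimage hCcont)
    refine vanish_of_vanish_open _ (hdef q) hUopen hp₁ fun p hp => ?_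
    have := hLeib p q
    exact (mul_eq_zero.mp this).resolve_left hp
  -- Step 2: the set of good q's is open and contains q₀; propagate by analyticity in q.
  have hCcont₂ : Continuous fun q => C p₀ q :=
    continuousOn_univ.mp (analyticOn_univ.mp (hCan₂ p₀)).continuousOn
  have hVopen : IsOpen {q : ℝ | C p₀ q ≠ 0} :=
    isOpen_compl_iff.mpr (isClosed_singleton.preimage hCcont₂)
  have cauchy : ∀ p q : ℝ, nabla (p + q) = nabla p + nabla q := by
    intro p q
    have h := vanish_of_vanish_open _ (hdef₂ p) hVopen hpq
      (fun q' hq' => step1 q' ⟨p₀, hq'⟩ p) q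
    linarith
  -- nabla is an additive continuous map, hence linear
  have hcont : Continuous nabla :=
    continuousOn_univ.mp hnanN.continuousOn
  let f : ℝ →+ ℝ := AddMonoidHom.mk' nabla fun a b => cauchy a b
  have hsmul : ∀ (c : ℝ) (x : ℝ), nabla (c • x) = c • nabla x := fun c x =>
    map_real_smul f hcont c x
  have h1 : ∀ x : ℝ, nabla x = x * nabla 1 := by
    intro x
    have := hsmul x 1
    simpa [smul_eq_mul] using this
  -- periodicity kills the slope
  have h0 : nabla 0 = 0 := by
    have := cauchy 0 0
    rw [add_zero] at this
    linarith
  have h2Λ : nabla (2 * Λ) = 0 := by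
    have := hnper 0
    rw [zero_add] at this
    rw [this, h0]
  have hslope : nabla 1 = 0 := by
    have := h1 (2 * Λ)
    rw [h2Λ] at this
    have h2Λne : (2 : ℝ) * Λ ≠ 0 := by positivity
    field_simp at this
    exact ((mul_eq_zero.mp this.symm).resolve_left h2Λne)
  intro p
  rw [h1 p, hslope, mul_zero]
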